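/- (Delaunay simplex correspondence.) Let P be a finite set of points in the open unit ball 𝕂ⁿ of ℝⁿ, and for each p ∈ P let s_p = p/(2√(1 − ‖p‖²)) and w_p = ‖p‖²/(4(1 − ‖p‖²)) − 1/√(1 − ‖p‖²). For a subset σ ⊆ P, the intersection ⋂_{p∈σ} V(p) of the hyperbolic Voronoi cells of the points of σ (with cells taken inside 𝕂ⁿ with respect to the Klein–Beltrami distance) is nonempty if and only if there exists a point x with ‖x‖ < 1 lying in the Euclidean power cell of s_p for every p ∈ σ. Hence σ spans a simplex of the hyperbolic Delaunay triangulation of P if and only if the corresponding power cells have a common point inside the open unit ball. -/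
import Mathlib


open RealInnerProductSpace

/-- Real inverse hyperbolic cosine, defined on `[1, ∞)`. -/
noncomputable def arcosh (x : ℝ) : ℝ := Real.log (x + Real.sqrt (x ^ 2 - 1))

/-- The argument of `arcosh` in the Klein–Beltrami distance. -/
noncomputable def kleinArg {n : ℕ} (x y : EuclideanSpace ℝ (Fin n)) : ℝ :=
  (1 - ⟪x, y⟫) / Real.sqrt ((1 - ‖x‖ ^ 2) * (1 - ‖y‖ ^ 2))

/-- The Klein–Beltrami distance on the open unit ball. -/
noncomputable def dK {n : ℕ} (x y : EuclideanSpace ℝ (Fin n)) : ℝ := arcosh (kleinArg x y)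

/-- Lifted center `s_p = p / (2 √(1 - ‖p‖²))`. -/
noncomputable def liftedCenter {n : ℕ} (p : EuclideanSpace ℝ (Fin n)) :
    EuclideanSpace ℝ (Fin n) :=
  (1 / (2 * Real.sqrt (1 - ‖p‖ ^ 2))) • p

/-- Lifted weight `w_p = ‖p‖² / (4 (1 - ‖p‖²)) - 1 / √(1 - ‖p‖²)`. -/
noncomputable def liftedWeight {n : ℕ} (p : EuclideanSpace ℝ (Fin n)) : ℝ :=
  ‖p‖ ^ 2 / (4 * (1 - ‖p‖ ^ 2)) - 1 / Real.sqrt (1 - ‖p‖ ^ 2)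

/-- Euclidean power distance of `x` to a center `s` with weight `w`. -/
noncomputable def powerDist {n : ℕ} (x s : EuclideanSpace ℝ (Fin n)) (w : ℝ) : ℝ :=
  ‖x - s‖ ^ 2 - w

lemma pos_aux {n : ℕ} {p : EuclideanSpace ℝ (Fin n)} (h : ‖p‖ < 1) : 0 < 1 - ‖p‖ ^ 2 := by
  nlinarith [norm_nonneg p]

lemma arcosh_le_iff {a b : ℝ} (ha : 1 ≤ a) (hb : 1 ≤ b) : arcosh a ≤ arcosh b ↔ a ≤ b := by
  unfold arcosh
  have h1 : ∀ t : ℝ, 1 ≤ t → 0 < t + Real.sqrt (t ^ 2 - 1) := fun t ht => by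
    have := Real.sqrt_nonneg (t ^ 2 - 1); linarith
  rw [Real.log_le_log_iff (h1 a ha) (h1 b hb)]
  constructor
  · intro h
    by_contra hab
    push_neg at hab
    have h2 : Real.sqrt (b ^ 2 - 1) ≤ Real.sqrt (a ^ 2 - 1) := by
      apply Real.sqrt_le_sqrt; nlinarith
    linarith
  · intro h
    have h2 : Real.sqrt (a ^ 2 - 1) ≤ Real.sqrt (b ^ 2 - 1) := by
      apply Real.sqrt_le_sqrt; nlinarith
    linarith

lemma one_le_kleinArg {n : ℕ} {x p : EuclideanSpace ℝ (Fin n)} (hx : ‖x‖ < 1)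
    (hp : ‖p‖ < 1) : 1 ≤ kleinArg x p := by
  have hx' := pos_aux hx
  have hp' := pos_aux hp
  have hD : 0 < (1 - ‖x‖ ^ 2) * (1 - ‖p‖ ^ 2) := mul_pos hx' hp'
  rw [kleinArg, le_div_iff₀ (Real.sqrt_pos.mpr hD)]
  have hcs := real_inner_le_norm x p
  have h1 : Real.sqrt ((1 - ‖x‖ ^ 2) * (1 - ‖p‖ ^ 2)) ≤ 1 - ‖x‖ * ‖p‖ := by
    rw [show (1 - ‖x‖ * ‖p‖) = Real.sqrt ((1 - ‖x‖ * ‖p‖) ^ 2) from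
      (Real.sqrt_sq (by nlinarith [norm_nonneg x, norm_nonneg p])).symm]
    apply Real.sqrt_le_sqrt
    nlinarith [norm_nonneg x, norm_nonneg p, sq_nonneg (‖x‖ - ‖p‖)]
  linarith

lemma powerDist_eq {n : ℕ} (x p : EuclideanSpace ℝ (Fin n)) (hp : ‖p‖ < 1) :
    powerDist x (liftedCenter p) (liftedWeight p)
      = ‖x‖ ^ 2 + (1 - ⟪x, p⟫) / Real.sqrt (1 - ‖p‖ ^ 2) := by
  have hp' := pos_aux hp
  have hs : 0 < Real.sqrt (1 - ‖p‖ ^ 2) := Real.sqrt_pos.mpr hp'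
  have hsq : Real.sqrt (1 - ‖p‖ ^ 2) ^ 2 = 1 - ‖p‖ ^ 2 := Real.sq_sqrt hp'.le
  rw [powerDist, liftedCenter, liftedWeight, @norm_sub_sq_real, real_inner_smul_right,
    norm_smul]
  have hc : ‖(1 / (2 * Real.sqrt (1 - ‖p‖ ^ 2)))‖ = 1 / (2 * Real.sqrt (1 - ‖p‖ ^ 2)) := by
    rw [Real.norm_eq_abs, abs_of_pos (by positivity)]
  rw [hc]
  set i : ℝ := ⟪x, p⟫
  set s : ℝ := Real.sqrt (1 - ‖p‖ ^ 2)
  rw [show (4 : ℝ) * (1 - ‖p‖ ^ 2) = 4 * s ^ 2 by rw [hsq]]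
  field_simp
  ring

lemma key {n : ℕ} {x p q : EuclideanSpace ℝ (Fin n)} (hx : ‖x‖ < 1) (hp : ‖p‖ < 1)
    (hq : ‖q‖ < 1) :
    dK x p ≤ dK x q ↔
      powerDist x (liftedCenter p) (liftedWeight p)
        ≤ powerDist x (liftedCenter q) (liftedWeight q) := by
  have ha : 0 < Real.sqrt (1 - ‖x‖ ^ 2) := Real.sqrt_pos.mpr (pos_aux hx)
  rw [dK, dK, arcosh_le_iff (one_le_kleinArg hx hp) (one_le_kleinArg hx hq),
    powerDist_eq x p hp, powerDist_eq x q hq, add_le_add_iff_left, kleinArg, kleinArg,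
    Real.sqrt_mul (pos_aux hx).le, Real.sqrt_mul (pos_aux hx).le,
    div_mul_eq_div_div_swap, div_mul_eq_div_div_swap, div_le_div_iff_of_pos_right ha]

theorem delaunay_simplex_correspondence {n : ℕ} (P : Finset (EuclideanSpace ℝ (Fin n)))
    (hP : ∀ p ∈ P, ‖p‖ < 1) (σ : Finset (EuclideanSpace ℝ (Fin n))) (hσ : σ ⊆ P) :
    (∃ x : EuclideanSpace ℝ (Fin n), ‖x‖ < 1 ∧ ∀ p ∈ σ, ∀ q ∈ P, dK x p ≤ dK x q) ↔
      (∃ x : EuclideanSpace ℝ (Fin n), ‖x‖ < 1 ∧ ∀ p ∈ σ, ∀ q ∈ P,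
        powerDist x (liftedCenter p) (liftedWeight p)
          ≤ powerDist x (liftedCenter q) (liftedWeight q)) := by
  constructor
  · rintro ⟨x, hx, h⟩
    exact ⟨x, hx, fun p hp q hq => (key hx (hP p (hσ hp)) (hP q hq)).mp (h p hp q hq)⟩
  · rintro ⟨x, hx, h⟩
    exact ⟨x, hx, fun p hp q hq => (key hx (hP p (hσ hp)) (hP q hq)).mpr (h p hp q hq)⟩
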